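/- Let G = ([n], E) be a dependency graph of events A_1, ..., A_n with probabilities p_1, ..., p_n, and let 0 < λ < 1. Then there exists a probability space and events B_1, ..., B_n on it such that G is a dependency graph of {B_i}, Pr(B_i) = λ p_i for all i, the B_i are exclusive whenever the A_i are exclusive, and Pr(∪_i A_i) − (1−λ) Σ_i p_i ≤ Pr(∪_i B_i) ≤ Pr(∪_i A_i). -/

import Mathlib

open MeasureTheory
open scoped ENNReal

/-- `G` is a dependency graph of the events `A i` under measure `μ`. -/
def IsDepGraph {Ω : Type} [MeasurableSpace Ω] (μ : Measure Ω) {n : ℕ}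
    (G : SimpleGraph (Fin n)) (A : Fin n → Set Ω) : Prop :=
  (∀ i, MeasurableSet (A i)) ∧
  ∀ i : Fin n, ∀ S : Finset (Fin n), (∀ j ∈ S, j ≠ i ∧ ¬ G.Adj i j) →
    μ (A i ∩ ⋂ j ∈ S, A j) = μ (A i) * μ (⋂ j ∈ S, A j)

/-- The events are pairwise exclusive along the edges of `G`. -/
def IsExclusive {Ω : Type} [MeasurableSpace Ω] (μ : Measure Ω) {n : ℕ}
    (G : SimpleGraph (Fin n)) (A : Fin n → Set Ω) : Prop :=
  ∀ i j, G.Adj i j → μ (A i ∩ A j) = 0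

theorem stmt1 {Ω : Type} [MeasurableSpace Ω] (μ : Measure Ω) [IsProbabilityMeasure μ]
    {n : ℕ} (G : SimpleGraph (Fin n)) (A : Fin n → Set Ω) (p : Fin n → ℝ)
    (hdep : IsDepGraph μ G A) (hp : ∀ i, (μ (A i)).toReal = p i)
    (lam : ℝ) (hlam0 : 0 < lam) (hlam1 : lam < 1) :
    ∃ (Ω' : Type) (_ : MeasurableSpace Ω') (μ' : Measure Ω'),
      IsProbabilityMeasure μ' ∧
      ∃ B : Fin n → Set Ω',
        IsDepGraph μ' G B ∧
        (∀ i, (μ' (B i)).toReal = lam * p i) ∧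
        (IsExclusive μ G A → IsExclusive μ' G B) ∧
        (μ (⋃ i, A i)).toReal - (1 - lam) * ∑ i, p i ≤ (μ' (⋃ i, B i)).toReal ∧
        (μ' (⋃ i, B i)).toReal ≤ (μ (⋃ i, A i)).toReal := by
  classical
  set L : ℝ≥0∞ := ENNReal.ofReal lam with hLdef
  have hL1 : L ≤ 1 := by
    rw [hLdef, ← ENNReal.ofReal_one]
    exact ENNReal.ofReal_le_ofReal hlam1.le
  -- the factor measure : uniform on [0,1]
  set m : Measure ℝ := volume.restrict (Set.Icc (0:ℝ) 1) with hmdef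
  haveI hmprob : IsProbabilityMeasure m := by
    constructor
    rw [hmdef, Measure.restrict_apply MeasurableSet.univ, Set.univ_inter, Real.volume_Icc]
    norm_num
  have hmIcc : m (Set.Icc 0 lam) = L := by
    rw [hmdef, Measure.restrict_apply measurableSet_Icc,
      Set.inter_eq_left.mpr (Set.Icc_subset_Icc le_rfl hlam1.le), Real.volume_Icc, sub_zero]
  set ν : Measure (Fin n → ℝ) := Measure.pi (fun _ => m) with hνdef
  haveI hνprob : IsProbabilityMeasure ν := by
    rw [hνdef]; infer_instance
  set μ' : Measure (Ω × (Fin n → ℝ)) := μ.prod ν with hμ'def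
  haveI : IsProbabilityMeasure μ' := by
    rw [hμ'def]; infer_instance
  set C : Fin n → Set (Fin n → ℝ) := fun i => (fun x => x i) ⁻¹' Set.Icc 0 lam with hCdef
  have hCmeas : ∀ i, MeasurableSet (C i) :=
    fun i => (measurable_pi_apply i) measurableSet_Icc
  -- measure of finite intersections of the C's
  have hνC : ∀ T : Finset (Fin n), ν (⋂ j ∈ T, C j) = L ^ T.card := by
    intro T
    have hset : (⋂ j ∈ T, C j)
        = Set.pi Set.univ (fun j => if j ∈ T then Set.Icc 0 lam else Set.univ) := by
      ext x
      simp only [Set.mem_iInter, hCdef, Set.mem_preimage, Set.mem_pi, Set.mem_univ,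
        true_implies]
      constructor
      · intro h j
        split_ifs with hj
        · exact h j hj
        · exact Set.mem_univ _
      · intro h j hj
        have := h j
        rwa [if_pos hj] at this
    rw [hset, hνdef, Measure.pi_pi]
    simp only [apply_ite m, hmIcc, measure_univ]
    rw [Finset.prod_ite_mem, Finset.univ_inter, Finset.prod_const]
  have hνCi : ∀ i, ν (C i) = L := by
    intro i
    have := hνC {i}
    simpa using this
  -- the events
  set B : Fin n → Set (Ω × (Fin n → ℝ)) := fun i => A i ×ˢ C i with hBdef
  have hBInter : ∀ T : Finset (Fin n),
      (⋂ j ∈ T, B j) = (⋂ j ∈ T, A j) ×ˢ (⋂ j ∈ T, C j) := by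
    intro T
    ext ⟨a, x⟩
    simp only [Set.mem_iInter, hBdef, Set.mem_prod]
    exact ⟨fun h => ⟨fun j hj => (h j hj).1, fun j hj => (h j hj).2⟩,
      fun h j hj => ⟨h.1 j hj, h.2 j hj⟩⟩
  have hμ'B : ∀ i, μ' (B i) = μ (A i) * L := by
    intro i
    rw [hμ'def, hBdef]
    simp only
    rw [Measure.prod_prod, hνCi]
  refine ⟨Ω × (Fin n → ℝ), inferInstance, μ', inferInstance, B, ?_, ?_, ?_, ?_, ?_⟩
  · -- dependency graph
    constructor
    · exact fun i => (hdep.1 i).prod (hCmeas i)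
    · intro i S hS
      have hiS : i ∉ S := fun h => (hS i h).1 rfl
      have h1 : B i ∩ ⋂ j ∈ S, B j
          = (A i ∩ ⋂ j ∈ S, A j) ×ˢ (C i ∩ ⋂ j ∈ S, C j) := by
        rw [hBInter S, hBdef]
        simp only
        rw [Set.prod_inter_prod]
      have h2 : C i ∩ ⋂ j ∈ S, C j = ⋂ j ∈ insert i S, C j :=
        (Finset.set_biInter_insert i S C).symm
      have h3 : ν (C i ∩ ⋂ j ∈ S, C j) = L ^ (S.card + 1) := by
        rw [h2, hνC, Finset.card_insert_of_notMem hiS]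
      rw [h1, hμ'def, Measure.prod_prod, h3, hdep.2 i S hS, hμ'B,
        hBInter S, Measure.prod_prod, hνC]
      ring
  · -- probabilities
    intro i
    rw [hμ'B, ENNReal.toReal_mul, hp, hLdef, ENNReal.toReal_ofReal hlam0.le]
    ring
  · -- exclusivity
    intro hexc i j hij
    have hsub : B i ∩ B j ⊆ (A i ∩ A j) ×ˢ Set.univ := by
      rintro ⟨a, x⟩ ⟨⟨ha1, -⟩, ⟨ha2, -⟩⟩
      exact ⟨⟨ha1, ha2⟩, Set.mem_univ _⟩
    have : μ' ((A i ∩ A j) ×ˢ Set.univ) = 0 := by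
      rw [hμ'def, Measure.prod_prod, measure_univ, mul_one, hexc i j hij]
    exact le_antisymm (le_of_le_of_eq (measure_mono hsub) this) zero_le
  · -- lower bound
    have hAU : μ (⋃ i, A i) = μ' ((⋃ i, A i) ×ˢ Set.univ) := by
      rw [hμ'def, Measure.prod_prod, measure_univ, mul_one]
    have hsub : ((⋃ i, A i) ×ˢ (Set.univ : Set (Fin n → ℝ)))
        ⊆ (⋃ i, B i) ∪ ⋃ i, (A i ×ˢ (C i)ᶜ) := by
      rintro ⟨a, x⟩ ⟨ha, -⟩
      obtain ⟨i, hi⟩ := Set.mem_iUnion.mp ha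
      by_cases hx : x ∈ C i
      · exact Or.inl (Set.mem_iUnion.mpr ⟨i, hi, hx⟩)
      · exact Or.inr (Set.mem_iUnion.mpr ⟨i, hi, hx⟩)
    have hcompl : ∀ i, μ' (A i ×ˢ (C i)ᶜ) = μ (A i) * ENNReal.ofReal (1 - lam) := by
      intro i
      rw [hμ'def, Measure.prod_prod, measure_compl (hCmeas i) (measure_ne_top _ _),
        measure_univ, hνCi, hLdef, ← ENNReal.ofReal_one, ← ENNReal.ofReal_sub _ hlam0.le]
    have hbound : μ (⋃ i, A i)
        ≤ μ' (⋃ i, B i) + ∑ i, μ (A i) * ENNReal.ofReal (1 - lam) := by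
      calc μ (⋃ i, A i) = μ' ((⋃ i, A i) ×ˢ Set.univ) := hAU
        _ ≤ μ' ((⋃ i, B i) ∪ ⋃ i, (A i ×ˢ (C i)ᶜ)) := measure_mono hsub
        _ ≤ μ' (⋃ i, B i) + μ' (⋃ i, (A i ×ˢ (C i)ᶜ)) := measure_union_le _ _
        _ ≤ μ' (⋃ i, B i) + ∑' i, μ' (A i ×ˢ (C i)ᶜ) := by
            exact add_le_add_right (measure_iUnion_le _) _
        _ = μ' (⋃ i, B i) + ∑ i, μ (A i) * ENNReal.ofReal (1 - lam) := by
            rw [tsum_fintype]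
            simp_rw [hcompl]
    have htr : (μ (⋃ i, A i)).toReal
        ≤ (μ' (⋃ i, B i)).toReal + ∑ i, p i * (1 - lam) := by
      have hne : μ' (⋃ i, B i) + ∑ i, μ (A i) * ENNReal.ofReal (1 - lam) ≠ ⊤ := by
        refine ENNReal.add_ne_top.mpr ⟨measure_ne_top _ _, ?_⟩
        exact (ENNReal.sum_lt_top.mpr
          (fun i _ => ENNReal.mul_lt_top (measure_lt_top _ _) ENNReal.ofReal_lt_top)).ne
      have := ENNReal.toReal_mono hne hbound
      rwa [ENNReal.toReal_add (measure_ne_top _ _)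
          (ENNReal.add_ne_top.mp hne).2,
        ENNReal.toReal_sum, (by
          funext i
          rw [ENNReal.toReal_mul, hp, ENNReal.toReal_ofReal (by linarith)] :
          (fun i => (μ (A i) * ENNReal.ofReal (1 - lam)).toReal)
            = fun i => p i * (1 - lam))] at this
      · exact fun i _ => ENNReal.mul_ne_top (measure_ne_top _ _) ENNReal.ofReal_ne_top
    have : ∑ i, p i * (1 - lam) = (1 - lam) * ∑ i, p i := by
      rw [Finset.mul_sum]; exact Finset.sum_congr rfl fun i _ => mul_comm _ _
    linarith [htr, this ▸ htr]
  · -- upper bound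
    have hsub : (⋃ i, B i) ⊆ (⋃ i, A i) ×ˢ (Set.univ : Set (Fin n → ℝ)) := by
      rintro ⟨a, x⟩ hx
      obtain ⟨i, hi, -⟩ := Set.mem_iUnion.mp hx
      exact ⟨Set.mem_iUnion.mpr ⟨i, hi⟩, Set.mem_univ _⟩
    have : μ' (⋃ i, B i) ≤ μ (⋃ i, A i) := by
      calc μ' (⋃ i, B i) ≤ μ' ((⋃ i, A i) ×ˢ Set.univ) := measure_mono hsub
        _ = μ (⋃ i, A i) := by rw [hμ'def, Measure.prod_prod, measure_univ, mul_one]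
    exact ENNReal.toReal_mono (measure_ne_top _ _) this
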